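/- Let d ≥ 2 and r ≥ 1. There exists a constant C > 0 with the following property. For all g, m ∈ GL(d,ℝ) with ‖m‖ ≤ r and ‖m⁻¹‖ ≤ r, for every singular value decomposition g = k·diag(α)·k' of g, and for every singular value decomposition m·g = κ·diag(β)·κ'' of m·g, one has sin∠(κ·e₁, m·(k·e₁)) ≤ C · (α 1)/(α 0), where m·(k·e₁) denotes the matrix m applied to the vector k·e₁. -/

import Mathlib

open Matrix

/-- The operator norm of a `d × d` real matrix acting on Euclidean `ℝ^d`. -/
noncomputable def opNorm {d : ℕ} (M : Matrix (Fin d) (Fin d) ℝ) : ℝ :=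
  ‖LinearMap.toContinuousLinearMap (Matrix.toEuclideanLin M)‖

/-- The action of a `d × d` real matrix on Euclidean `ℝ^d`. -/
noncomputable def appE {d : ℕ} (M : Matrix (Fin d) (Fin d) ℝ)
    (v : EuclideanSpace ℝ (Fin d)) : EuclideanSpace ℝ (Fin d) :=
  Matrix.toEuclideanLin M v

/-- `IsSVD g k α k'` means `g = k · diag(α) · k'` is a singular value decomposition:
`k, k'` are orthogonal and `α` is positive and nonincreasing. -/
def IsSVD {d : ℕ} (g k : Matrix (Fin d) (Fin d) ℝ) (α : Fin d → ℝ)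
    (k' : Matrix (Fin d) (Fin d) ℝ) : Prop :=
  k * kᵀ = 1 ∧ k' * k'ᵀ = 1 ∧ (∀ i, 0 < α i) ∧ Antitone α ∧
    g = k * Matrix.diagonal α * k'

/-- The sine of the angle between two vectors of Euclidean `ℝ^d`. -/
noncomputable def sinAngle {d : ℕ} (u v : EuclideanSpace ℝ (Fin d)) : ℝ :=
  Real.sin (InnerProductGeometry.angle u v)

/-- The first standard basis vector of Euclidean `ℝ^d`. -/
noncomputable def e1 {d : ℕ} (h : 0 < d) : EuclideanSpace ℝ (Fin d) :=
  EuclideanSpace.single ⟨0, h⟩ 1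

noncomputable def E {d : ℕ} (x : Fin d → ℝ) : EuclideanSpace ℝ (Fin d) := (WithLp.equiv 2 _).symm x

lemma E_norm_sq {d : ℕ} (x : Fin d → ℝ) : ‖E x‖ ^ 2 = x ⬝ᵥ x := by
  rw [← real_inner_self_eq_norm_sq]
  rw [E, WithLp.equiv_symm_apply, PiLp.inner_apply]
  simp [dotProduct, RCLike.inner_apply, sq]

lemma orth_dot {d : ℕ} {k : Matrix (Fin d) (Fin d) ℝ} (h : kᵀ * k = 1) (x y : Fin d → ℝ) :
    (k *ᵥ x) ⬝ᵥ (k *ᵥ y) = x ⬝ᵥ y := by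
  rw [dotProduct_mulVec, ← mulVec_transpose, mulVec_mulVec, h, one_mulVec]

lemma opNorm_bound {d : ℕ} (M : Matrix (Fin d) (Fin d) ℝ) (x : Fin d → ℝ) :
    ‖E (M *ᵥ x)‖ ≤ opNorm M * ‖E x‖ :=
  (LinearMap.toContinuousLinearMap (Matrix.toEuclideanLin M)).le_opNorm (E x)

lemma single_pair_dot {d : ℕ} {i j : Fin d} (hij : i ≠ j) (c₀ c₁ : ℝ) :
    (c₀ • (Pi.single i 1 : Fin d → ℝ) + c₁ • (Pi.single j 1 : Fin d → ℝ)) ⬝ᵥ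
      (c₀ • (Pi.single i 1 : Fin d → ℝ) + c₁ • (Pi.single j 1 : Fin d → ℝ)) = c₀^2 + c₁^2 := by
  simp [add_dotProduct, dotProduct_add, smul_dotProduct, dotProduct_smul, hij, hij.symm,
    smul_eq_mul]
  ring

lemma diag_mulVec_single {d : ℕ} (f : Fin d → ℝ) (i : Fin d) (c : ℝ) :
    Matrix.diagonal f *ᵥ (c • (Pi.single i 1 : Fin d → ℝ))
      = (f i * c) • (Pi.single i 1 : Fin d → ℝ) := by
  funext j
  simp only [mulVec_diagonal, Pi.smul_apply, Pi.single_apply, smul_eq_mul]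
  by_cases h : j = i <;> simp [h]

/-- second singular value of `m*g` is at most `opNorm m` times that of `g`. -/
lemma sv2_le {d : ℕ} (hd : 2 ≤ d)
    (g m k : Matrix (Fin d) (Fin d) ℝ) (α : Fin d → ℝ) (k' : Matrix (Fin d) (Fin d) ℝ)
    (hk : k * kᵀ = 1) (hk' : k' * k'ᵀ = 1) (hα : ∀ i, 0 < α i) (hαm : Antitone α)
    (hg : g = k * Matrix.diagonal α * k')
    (κ : Matrix (Fin d) (Fin d) ℝ) (β : Fin d → ℝ) (κ'' : Matrix (Fin d) (Fin d) ℝ)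
    (hκ : κ * κᵀ = 1) (hκ'' : κ'' * κ''ᵀ = 1) (hβ : ∀ i, 0 < β i) (hβm : Antitone β)
    (hmg : m * g = κ * Matrix.diagonal β * κ'') :
    β ⟨1, Nat.lt_of_lt_of_le one_lt_two hd⟩ ≤ opNorm m * α ⟨1, Nat.lt_of_lt_of_le one_lt_two hd⟩ := by
  set i0 : Fin d := ⟨0, by omega⟩
  set i1 : Fin d := ⟨1, Nat.lt_of_lt_of_le one_lt_two hd⟩
  have hi01 : i0 ≠ i1 := by simp [i0, i1, Fin.ext_iff]
  have hkT : kᵀ * k = 1 := mul_eq_one_comm.mp hk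
  have hk'T : k'ᵀ * k' = 1 := mul_eq_one_comm.mp hk'
  have hκT : κᵀ * κ = 1 := mul_eq_one_comm.mp hκ
  have hκ''T : κ''ᵀ * κ'' = 1 := mul_eq_one_comm.mp hκ''
  set e0f : Fin d → ℝ := Pi.single i0 1 with he0f
  set e1f : Fin d → ℝ := Pi.single i1 1 with he1f
  set b0 : Fin d → ℝ := κ''ᵀ *ᵥ e0f
  set b1 : Fin d → ℝ := κ''ᵀ *ᵥ e1f
  set c : Fin d → ℝ := gᵀ *ᵥ (k *ᵥ e0f)
  obtain ⟨a, b, hab, habpos⟩ : ∃ a b : ℝ,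
      a * (b0 ⬝ᵥ c) + b * (b1 ⬝ᵥ c) = 0 ∧ 0 < a^2 + b^2 := by
    by_cases h0 : b0 ⬝ᵥ c = 0 ∧ b1 ⬝ᵥ c = 0
    · exact ⟨1, 0, by simp [h0.1], by norm_num⟩
    · refine ⟨-(b1 ⬝ᵥ c), b0 ⬝ᵥ c, by ring, ?_⟩
      rcases not_and_or.mp h0 with h | h <;>
        nlinarith [sq_pos_iff.mpr h, sq_nonneg (b0 ⬝ᵥ c), sq_nonneg (b1 ⬝ᵥ c)]
  set x : Fin d → ℝ := a • b0 + b • b1 with hxdef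
  -- κ'' x
  have hκ''b0 : κ'' *ᵥ b0 = e0f := by
    rw [mulVec_mulVec, hκ'', one_mulVec]
  have hκ''b1 : κ'' *ᵥ b1 = e1f := by
    rw [mulVec_mulVec, hκ'', one_mulVec]
  have hκ''x : κ'' *ᵥ x = a • e0f + b • e1f := by
    rw [hxdef, mulVec_add, mulVec_smul, mulVec_smul, hκ''b0, hκ''b1]
  -- ‖x‖²
  have hxx : x ⬝ᵥ x = a^2 + b^2 := by
    rw [← orth_dot hκ''T x x, hκ''x, he0f, he1f, single_pair_dot hi01]
  -- x ⟂ c, hence (k' x) i0 = 0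
  have hxc : x ⬝ᵥ c = 0 := by
    rw [hxdef, add_dotProduct, smul_dotProduct, smul_dotProduct, smul_eq_mul, smul_eq_mul, hab]
  set y : Fin d → ℝ := k' *ᵥ x with hy
  have hgx : g *ᵥ x = k *ᵥ (Matrix.diagonal α *ᵥ y) := by
    rw [hy, hg, mulVec_mulVec, mulVec_mulVec]
  have hy0 : y i0 = 0 := by
    have h1 : x ⬝ᵥ c = (g *ᵥ x) ⬝ᵥ (k *ᵥ e0f) := by
      rw [dotProduct_mulVec x gᵀ, ← mulVec_transpose, transpose_transpose]
    have h2 : (g *ᵥ x) ⬝ᵥ (k *ᵥ e0f) = α i0 * y i0 := by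
      rw [hgx, orth_dot hkT]
      simp [he0f, mulVec_diagonal]
    have := h1 ▸ hxc
    have h3 : α i0 * y i0 = 0 := by rw [← h2, ← this] -- careful
    exact (mul_eq_zero.mp h3).resolve_left (ne_of_gt (hα i0))
  -- ‖g x‖² ≤ α i1 ^2 * (a²+b²)
  have hyy : y ⬝ᵥ y = a^2 + b^2 := by rw [hy, orth_dot hk'T, hxx]
  have hgxgx : (g *ᵥ x) ⬝ᵥ (g *ᵥ x) ≤ α i1 ^ 2 * (a^2 + b^2) := by
    rw [hgx, orth_dot hkT]
    have : (Matrix.diagonal α *ᵥ y) ⬝ᵥ (Matrix.diagonal α *ᵥ y)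
        = ∑ i, (α i * y i) * (α i * y i) := by
      simp [dotProduct, mulVec_diagonal]
    rw [this, ← hyy]
    have hyy' : y ⬝ᵥ y = ∑ i, y i * y i := rfl
    rw [hyy', Finset.mul_sum]
    apply Finset.sum_le_sum
    intro i _
    by_cases hi : i = i0
    · subst hi; rw [hy0]; simp
    · have hi1 : i1 ≤ i := by
        have : (0:ℕ) < i.val := Nat.pos_of_ne_zero (fun h => hi (Fin.ext h))
        exact Fin.mk_le_of_le_val this
      have hαle : α i ≤ α i1 := hαm hi1
      have h0 : 0 ≤ α i := (hα i).le
      nlinarith [sq_nonneg (y i), mul_le_mul hαle hαle h0 (hα i1).le]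
  -- ‖(mg) x‖² ≥ β i1 ^2 * (a²+b²)
  have hmgx : (m * g) *ᵥ x = κ *ᵥ (Matrix.diagonal β *ᵥ (κ'' *ᵥ x)) := by
    rw [hmg, mulVec_mulVec, mulVec_mulVec]
  have hmgxlb : β i1 ^ 2 * (a^2 + b^2) ≤ ((m*g) *ᵥ x) ⬝ᵥ ((m*g) *ᵥ x) := by
    rw [hmgx, orth_dot hκT, hκ''x]
    have hdg : Matrix.diagonal β *ᵥ (a • e0f + b • e1f)
        = (β i0 * a) • e0f + (β i1 * b) • e1f := by
      rw [mulVec_add, he0f, he1f, diag_mulVec_single, diag_mulVec_single]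
    rw [hdg, he0f, he1f, single_pair_dot hi01]
    have hb01 : β i1 ≤ β i0 := hβm (by simp [i0, i1, Fin.le_def])
    have hb1 : 0 < β i1 := hβ i1
    nlinarith [sq_nonneg a, sq_nonneg b, mul_le_mul hb01 hb01 hb1.le (hβ i0).le]
  -- combine through opNorm m
  have hchain : ((m*g) *ᵥ x) ⬝ᵥ ((m*g) *ᵥ x) ≤ (opNorm m)^2 * ((g *ᵥ x) ⬝ᵥ (g *ᵥ x)) := by
    have h1 : (m*g) *ᵥ x = m *ᵥ (g *ᵥ x) := (mulVec_mulVec x m g).symm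
    rw [h1, ← E_norm_sq, ← E_norm_sq]
    have h2 := opNorm_bound m (g *ᵥ x)
    have h3 : 0 ≤ opNorm m := norm_nonneg _
    nlinarith [norm_nonneg (E (m *ᵥ (g *ᵥ x))), norm_nonneg (E (g *ᵥ x))]
  have hsq : β i1 ^ 2 ≤ (opNorm m * α i1) ^ 2 := by
    have hstep : (opNorm m)^2 * ((g *ᵥ x) ⬝ᵥ (g *ᵥ x)) ≤ (opNorm m * α i1)^2 * (a^2+b^2) := by
      have := mul_le_mul_of_nonneg_left hgxgx (sq_nonneg (opNorm m))
      nlinarith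
    have h4 : β i1 ^ 2 * (a^2+b^2) ≤ (opNorm m * α i1)^2 * (a^2+b^2) :=
      hmgxlb.trans (hchain.trans hstep)
    exact le_of_mul_le_mul_right h4 habpos
  have hb1 : 0 < β i1 := hβ i1
  have hnn : 0 ≤ opNorm m * α i1 := mul_nonneg (norm_nonneg _) (hα i1).le
  calc β i1 = Real.sqrt (β i1 ^ 2) := (Real.sqrt_sq hb1.le).symm
    _ ≤ Real.sqrt ((opNorm m * α i1)^2) := Real.sqrt_le_sqrt hsq
    _ = opNorm m * α i1 := Real.sqrt_sq hnn

lemma E_inner {d : ℕ} (x y : Fin d → ℝ) : (inner ℝ (E x) (E y) : ℝ) = x ⬝ᵥ y := by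
  simp [E, PiLp.inner_apply, dotProduct, RCLike.inner_apply, mul_comm]


/-- Uniformly over `m` in a compact part of `GL(d,ℝ)`, the attracting line `Ξ(m·g)` of an
SVD of `m·g` is at sine-distance at most `C · (α 1)/(α 0)` from `m · Ξ(g)`. -/
-- main helpers placed above
theorem stmt5 (d : ℕ) (hd : 2 ≤ d) (r : ℝ) (hr : 1 ≤ r) :
    ∃ C : ℝ, 0 < C ∧
      ∀ g m : Matrix (Fin d) (Fin d) ℝ, IsUnit g.det → IsUnit m.det →
        opNorm m ≤ r → opNorm m⁻¹ ≤ r →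
        ∀ (k : Matrix (Fin d) (Fin d) ℝ) (α : Fin d → ℝ)
          (k' : Matrix (Fin d) (Fin d) ℝ), IsSVD g k α k' →
        ∀ (κ : Matrix (Fin d) (Fin d) ℝ) (β : Fin d → ℝ)
          (κ'' : Matrix (Fin d) (Fin d) ℝ), IsSVD (m * g) κ β κ'' →
          sinAngle (appE κ (e1 (by omega))) (appE m (appE k (e1 (by omega))))
            ≤ C * (α ⟨1, by omega⟩ / α ⟨0, by omega⟩) := by
  refine ⟨r^2, by nlinarith, ?_⟩
  intro g m hg hm hmr hmir k α k' hSVD κ β κ'' hSVD2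
  obtain ⟨hk, hk', hα, hαm, hgdec⟩ := hSVD
  obtain ⟨hκ, hκ'', hβ, hβm, hmgdec⟩ := hSVD2
  have hd0 : 0 < d := by omega
  set i0 : Fin d := ⟨0, by omega⟩ with hi0def
  set i1 : Fin d := ⟨1, by omega⟩ with hi1def
  have hrpos : (0:ℝ) < r := lt_of_lt_of_le one_pos hr
  have hkT : kᵀ * k = 1 := mul_eq_one_comm.mp hk
  have hk'T : k'ᵀ * k' = 1 := mul_eq_one_comm.mp hk'
  have hκT : κᵀ * κ = 1 := mul_eq_one_comm.mp hκ
  have hκ''T : κ''ᵀ * κ'' = 1 := mul_eq_one_comm.mp hκ''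
  -- singular value comparison
  have hβ1 : β i1 ≤ r * α i1 := by
    have h1 := sv2_le hd g m k α k' hk hk' hα hαm hgdec κ β κ'' hκ hκ'' hβ hβm hmgdec
    have h2 : opNorm m * α ⟨1, by omega⟩ ≤ r * α ⟨1, by omega⟩ :=
      mul_le_mul_of_nonneg_right hmr (hα _).le
    exact h1.trans h2
  set e0f : Fin d → ℝ := Pi.single i0 1 with he0f
  set t : Fin d → ℝ := k'ᵀ *ᵥ e0f with ht
  set z : Fin d → ℝ := κ'' *ᵥ t with hz
  set w : Fin d → ℝ := Matrix.diagonal β *ᵥ z with hw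
  set u : Fin d → ℝ := κ *ᵥ e0f with hu
  set V : Fin d → ℝ := m *ᵥ (k *ᵥ e0f) with hV
  have he0e0 : e0f ⬝ᵥ e0f = 1 := by simp [he0f]
  -- g t = α i0 • (k e0)
  have hgt : g *ᵥ t = α i0 • (k *ᵥ e0f) := by
    rw [ht, hgdec, mulVec_mulVec, mul_assoc, mul_assoc, hk', mul_one, ← mulVec_mulVec]
    have hD : Matrix.diagonal α *ᵥ e0f = α i0 • e0f := by
      have := diag_mulVec_single α i0 1
      rwa [one_smul, mul_one] at this
    rw [hD, mulVec_smul]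
  have hmgt : (m * g) *ᵥ t = κ *ᵥ w := by
    rw [hmgdec, hw, hz, ← mulVec_mulVec, ← mulVec_mulVec]
  have hαV : α i0 • V = κ *ᵥ w := by
    rw [hV, ← mulVec_smul, ← hgt, mulVec_mulVec, hmgt]
  have hzz : z ⬝ᵥ z = 1 := by
    rw [hz, orth_dot hκ''T, ht, orth_dot (by rw [transpose_transpose]; exact hk'), he0e0]
  have huu : u ⬝ᵥ u = 1 := by rw [hu, orth_dot hκT, he0e0]
  have hαuV : α i0 * (u ⬝ᵥ V) = w i0 := by
    have h1 : u ⬝ᵥ (α i0 • V) = α i0 * (u ⬝ᵥ V) := by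
      rw [dotProduct_smul, smul_eq_mul]
    rw [← h1, hαV, hu, orth_dot hκT]
    simp [he0f]
  have hαVV : α i0 ^ 2 * (V ⬝ᵥ V) = w ⬝ᵥ w := by
    have h1 : (α i0 • V) ⬝ᵥ (α i0 • V) = α i0 ^ 2 * (V ⬝ᵥ V) := by
      rw [smul_dotProduct, dotProduct_smul, smul_eq_mul, smul_eq_mul]; ring
    rw [← h1, hαV, orth_dot hκT]
  -- numerator bound
  have hnum : w ⬝ᵥ w - (w i0)^2 ≤ β i1 ^ 2 := by
    have hwi : ∀ i, w i = β i * z i := fun i => by rw [hw, mulVec_diagonal]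
    have hsum : w ⬝ᵥ w = ∑ i, (β i * z i) * (β i * z i) := by
      simp only [dotProduct]
      exact Finset.sum_congr rfl fun i _ => by rw [hwi]
    have hsplit : w ⬝ᵥ w = (β i0 * z i0) * (β i0 * z i0)
        + ∑ i ∈ Finset.univ.erase i0, (β i * z i) * (β i * z i) := by
      rw [hsum, ← Finset.add_sum_erase _ _ (Finset.mem_univ i0)]
    have hbd : ∑ i ∈ Finset.univ.erase i0, (β i * z i) * (β i * z i)
        ≤ β i1 ^ 2 * ∑ i ∈ Finset.univ.erase i0, z i * z i := by
      rw [Finset.mul_sum]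
      apply Finset.sum_le_sum
      intro i hi
      have hne : i ≠ i0 := Finset.ne_of_mem_erase hi
      have hi1 : i1 ≤ i := by
        have : (0:ℕ) < i.val := Nat.pos_of_ne_zero (fun h => hne (Fin.ext h))
        exact Fin.mk_le_of_le_val this
      have hble : β i ≤ β i1 := hβm hi1
      nlinarith [sq_nonneg (z i), (hβ i).le, mul_le_mul hble hble (hβ i).le (hβ i1).le]
    have hz2 : ∑ i ∈ Finset.univ.erase i0, z i * z i ≤ 1 := by
      rw [← hzz]
      exact Finset.sum_le_sum_of_subset_of_nonneg (Finset.erase_subset _ _)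
        (fun i _ _ => mul_self_nonneg (z i))
    have hβ2 : (0:ℝ) ≤ β i1 ^ 2 := sq_nonneg _
    have := hbd.trans (by nlinarith : β i1 ^ 2 * ∑ i ∈ Finset.univ.erase i0, z i * z i ≤ β i1 ^ 2)
    rw [hsplit, hwi i0]
    nlinarith
  -- lower bound on ‖E V‖
  have hke0 : ‖E (k *ᵥ e0f)‖ = 1 := by
    have h1 : ‖E (k *ᵥ e0f)‖ ^ 2 = 1 := by rw [E_norm_sq, orth_dot hkT, he0e0]
    rw [← Real.sqrt_sq (norm_nonneg _), h1, Real.sqrt_one]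
  have hinv : k *ᵥ e0f = m⁻¹ *ᵥ V := by
    rw [hV, mulVec_mulVec, Matrix.nonsing_inv_mul _ hm, one_mulVec]
  have hEV : 1 / r ≤ ‖E V‖ := by
    have h1 : (1:ℝ) ≤ opNorm m⁻¹ * ‖E V‖ := by
      rw [← hke0, hinv]; exact opNorm_bound m⁻¹ V
    have h2 : opNorm m⁻¹ * ‖E V‖ ≤ r * ‖E V‖ :=
      mul_le_mul_of_nonneg_right hmir (norm_nonneg _)
    rw [div_le_iff₀ hrpos, mul_comm]
    exact h1.trans h2
  have hEVpos : 0 < ‖E V‖ := lt_of_lt_of_le (by positivity) hEV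
  -- the sine formula
  have hEu : ‖E u‖ = 1 := by
    have h1 : ‖E u‖ ^ 2 = 1 := by rw [E_norm_sq, huu]
    rw [← Real.sqrt_sq (norm_nonneg _), h1, Real.sqrt_one]
  have hsin := InnerProductGeometry.sin_angle_mul_norm_mul_norm (E u) (E V)
  rw [E_inner, E_inner, E_inner, hEu, huu, one_mul, one_mul] at hsin
  have hα0 : 0 < α i0 := hα i0
  have hfrac : V ⬝ᵥ V - (u ⬝ᵥ V) * (u ⬝ᵥ V) ≤ (β i1 / α i0) ^ 2 := by
    have h5 : α i0 ^ 2 * (V ⬝ᵥ V - (u ⬝ᵥ V) * (u ⬝ᵥ V)) = w ⬝ᵥ w - (w i0)^2 := by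
      rw [← hαVV, ← hαuV]; ring
    rw [div_pow, le_div_iff₀ (by positivity : (0:ℝ) < α i0 ^ 2)]
    calc (V ⬝ᵥ V - (u ⬝ᵥ V) * (u ⬝ᵥ V)) * α i0 ^ 2
        = w ⬝ᵥ w - (w i0)^2 := by rw [← h5]; ring
      _ ≤ β i1 ^ 2 := hnum
  have hsqrt : Real.sqrt (V ⬝ᵥ V - (u ⬝ᵥ V) * (u ⬝ᵥ V)) ≤ β i1 / α i0 := by
    calc Real.sqrt (V ⬝ᵥ V - (u ⬝ᵥ V) * (u ⬝ᵥ V))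
        ≤ Real.sqrt ((β i1 / α i0) ^ 2) := Real.sqrt_le_sqrt hfrac
      _ = β i1 / α i0 := Real.sqrt_sq (div_nonneg (hβ i1).le hα0.le)
  have hs : Real.sin (InnerProductGeometry.angle (E u) (E V)) * ‖E V‖ ≤ β i1 / α i0 :=
    hsin.le.trans hsqrt
  have hsin0 : 0 ≤ Real.sin (InnerProductGeometry.angle (E u) (E V)) :=
    Real.sin_nonneg_of_nonneg_of_le_pi (InnerProductGeometry.angle_nonneg _ _)
      (InnerProductGeometry.angle_le_pi _ _)
  have hfinal : Real.sin (InnerProductGeometry.angle (E u) (E V)) ≤ r^2 * (α i1 / α i0) := by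
    have h6 : Real.sin (InnerProductGeometry.angle (E u) (E V)) ≤ (β i1 / α i0) / ‖E V‖ := by
      rw [le_div_iff₀ hEVpos]; exact hs
    have h7 : (β i1 / α i0) / ‖E V‖ ≤ (β i1 / α i0) * r := by
      rw [div_le_iff₀ hEVpos]
      have h8 : 1 ≤ r * ‖E V‖ := by
        have := mul_le_mul_of_nonneg_left hEV hrpos.le
        rwa [mul_one_div, div_self hrpos.ne'] at this
      have h9 : 0 ≤ β i1 / α i0 := div_nonneg (hβ i1).le hα0.le
      calc β i1 / α i0 = (β i1 / α i0) * 1 := by ring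
        _ ≤ (β i1 / α i0) * (r * ‖E V‖) := mul_le_mul_of_nonneg_left h8 h9
        _ = β i1 / α i0 * r * ‖E V‖ := by ring
    have h10 : (β i1 / α i0) * r ≤ (r * α i1 / α i0) * r := by
      have : β i1 / α i0 ≤ r * α i1 / α i0 := by
        apply div_le_div_of_nonneg_right hβ1 hα0.le
      exact mul_le_mul_of_nonneg_right this hrpos.le
    have h11 : (r * α i1 / α i0) * r = r^2 * (α i1 / α i0) := by ring
    linarith
  exact hfinal
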